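/- For positive integers Λ, α, r with 2 ≤ α and r ≤ Λ - α + 1, the ratio of L_UB(r) = C(Λ-α,r)/(C(Λ,r)·(C(r+α,r)-1)) to L_LB(r) = C(Λ, r+α)/(C(Λ,α)·C(Λ,r)) is at most 3/2. -/

import Mathlib

theorem stmt_3 (Λ α r : ℕ) (hΛ : 0 < Λ) (hr : 0 < r) (hα : 2 ≤ α)
    (hrΛ : r ≤ Λ - α + 1) :
    ((Nat.choose (Λ - α) r : ℚ) /
        (Nat.choose Λ r * ((Nat.choose (r + α) r : ℚ) - 1))) /
      ((Nat.choose Λ (r + α) : ℚ) / (Nat.choose Λ α * Nat.choose Λ r)) ≤ 3 / 2 := by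
  by_cases ha : Nat.choose (Λ - α) r = 0
  · rw [ha]; norm_num
  -- nondegenerate case: r ≤ Λ - α
  have hrle : r ≤ Λ - α := by
    by_contra h
    exact ha (Nat.choose_eq_zero_of_lt (Nat.lt_of_not_le h))
  have hαΛ : α ≤ Λ := by omega
  have hraΛ : r + α ≤ Λ := by omega
  -- key identity
  have hsymm : Nat.choose (r + α) α = Nat.choose (r + α) r := by
    have := Nat.choose_symm (n := r + α) (k := r) (Nat.le_add_right _ _)
    simpa using this
  have hid : Nat.choose Λ (r + α) * Nat.choose (r + α) r
      = Nat.choose Λ α * Nat.choose (Λ - α) r := by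
    have := Nat.choose_mul (n := Λ) (k := r + α) (s := α) (Nat.le_add_left _ _)
    simpa [hsymm, Nat.add_sub_cancel] using this
  -- n ≥ 3
  have hn3 : 3 ≤ Nat.choose (r + α) r := by
    have h1 : Nat.choose (r + 2) r ≤ Nat.choose (r + α) r :=
      Nat.choose_le_choose r (by omega)
    have h2 : Nat.choose (r + 2) r = Nat.choose (r + 2) 2 := by
      have := Nat.choose_symm (n := r + 2) (k := r) (by omega)
      simpa using this.symm
    have h3 : Nat.choose 3 2 ≤ Nat.choose (r + 2) 2 :=
      Nat.choose_le_choose 2 (by omega)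
    have h4 : Nat.choose 3 2 = 3 := by decide
    omega
  -- positivity of all casts
  have hb : (0 : ℚ) < Nat.choose Λ r :=
    Nat.cast_pos.mpr (Nat.choose_pos (by omega))
  have hc : (0 : ℚ) < Nat.choose Λ (r + α) :=
    Nat.cast_pos.mpr (Nat.choose_pos hraΛ)
  have hd : (0 : ℚ) < Nat.choose Λ α :=
    Nat.cast_pos.mpr (Nat.choose_pos hαΛ)
  have hnq : (3 : ℚ) ≤ Nat.choose (r + α) r := by exact_mod_cast hn3
  have hidq : (Nat.choose Λ (r + α) : ℚ) * Nat.choose (r + α) r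
      = Nat.choose Λ α * Nat.choose (Λ - α) r := by exact_mod_cast hid
  have haq : (0 : ℚ) ≤ Nat.choose (Λ - α) r := Nat.cast_nonneg _
  have hn1 : (0 : ℚ) < (Nat.choose (r + α) r : ℚ) - 1 := by linarith
  have hbne : (Nat.choose Λ r : ℚ) ≠ 0 := ne_of_gt hb
  have hcne : (Nat.choose Λ (r + α) : ℚ) ≠ 0 := ne_of_gt hc
  have hdne : (Nat.choose Λ α : ℚ) ≠ 0 := ne_of_gt hd
  have hn1ne : (Nat.choose (r + α) r : ℚ) - 1 ≠ 0 := ne_of_gt hn1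
  rw [div_div_div_eq, div_le_div_iff₀ (by positivity) (by norm_num)]
  nlinarith [mul_pos hb hn1, mul_pos hc hb, mul_pos (mul_pos hc hb) hn1,
    mul_pos hd hb]
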